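/- (Isometry of the martingale correspondence.) Let (Ω, F, P) be a probability space, I a directed poset, and (F_i)_{i∈I} a filtration of sub-σ-algebras with σ(⋃_{i∈I} F_i) = F. Let r > 0 and let X, Y : Ω → [0,∞) be measurable with 0 ≤ X ≤ r and 0 ≤ Y ≤ r P-a.e. Then sup_{i∈I} ∫ |E[X | F_i] − E[Y | F_i]| dP = ∫ |X − Y| dP. -/

import Mathlib

open MeasureTheory Filter MeasurableSpace Set

/-- **Isometry of the martingale correspondence.** For a filtration `(F_i)` over a
directed poset generating `F`, and measurable `X, Y : Ω → [0,∞)` with `0 ≤ X,Y ≤ r`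
a.e., `sup_i ∫ |E[X|F_i] − E[Y|F_i]| dP = ∫ |X − Y| dP`. -/
theorem stmt17 {Ω I : Type*} [PartialOrder I] [IsDirected I (· ≤ ·)] [Nonempty I]
    {mΩ : MeasurableSpace Ω} (P : Measure Ω) [IsProbabilityMeasure P]
    (F : I → MeasurableSpace Ω) (hmono : Monotone F) (hle : ∀ i, F i ≤ mΩ)
    (hgen : (⨆ i, F i) = mΩ)
    (r : ℝ) (hr : 0 < r) (X Y : Ω → ℝ) (hX : Measurable X) (hY : Measurable Y)
    (hX0 : 0 ≤ᵐ[P] X) (hXr : X ≤ᵐ[P] fun _ => r)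
    (hY0 : 0 ≤ᵐ[P] Y) (hYr : Y ≤ᵐ[P] fun _ => r) :
    ⨆ i, ∫ x, |(P[X | F i]) x - (P[Y | F i]) x| ∂P = ∫ x, |X x - Y x| ∂P := by
  set Z : Ω → ℝ := X - Y with hZdef
  have hZx : ∀ x, Z x = X x - Y x := fun x => rfl
  have hXint : Integrable X P := by
    refine Integrable.mono' (integrable_const r) hX.aestronglyMeasurable ?_
    filter_upwards [hX0, hXr] with x h0 h1
    have h0' : (0:ℝ) ≤ X x := h0
    rw [Real.norm_eq_abs, abs_le]; exact ⟨by linarith, h1⟩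
  have hYint : Integrable Y P := by
    refine Integrable.mono' (integrable_const r) hY.aestronglyMeasurable ?_
    filter_upwards [hY0, hYr] with x h0 h1
    have h0' : (0:ℝ) ≤ Y x := h0
    rw [Real.norm_eq_abs, abs_le]; exact ⟨by linarith, h1⟩
  have hZint : Integrable Z P := hXint.sub hYint
  have hZbd : ∀ᵐ x ∂P, |Z x| ≤ r := by
    filter_upwards [hX0, hXr, hY0, hYr] with x h1 h2 h3 h4
    have h1' : (0:ℝ) ≤ X x := h1
    have h3' : (0:ℝ) ≤ Y x := h3
    rw [hZx, abs_le]; constructor <;> linarith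
  have hRHS : ∫ x, |X x - Y x| ∂P = ∫ x, |Z x| ∂P := rfl
  rw [hRHS]
  have hce : ∀ i, (fun x => (P[X | F i]) x - (P[Y | F i]) x) =ᵐ[P] P[Z | F i] := by
    intro i
    filter_upwards [condExp_sub hXint hYint (m := F i)] with x hx
    rw [hZdef, hx]; rfl
  have hub : ∀ i, ∫ x, |(P[X | F i]) x - (P[Y | F i]) x| ∂P ≤ ∫ x, |Z x| ∂P := by
    intro i
    calc ∫ x, |(P[X | F i]) x - (P[Y | F i]) x| ∂P
        = ∫ x, |(P[Z | F i]) x| ∂P := by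
          refine integral_congr_ae ?_
          filter_upwards [hce i] with x hx; rw [hx]
      _ ≤ ∫ x, |Z x| ∂P := integral_abs_condExp_le Z
  have hbdd : BddAbove (Set.range fun i => ∫ x, |(P[X | F i]) x - (P[Y | F i]) x| ∂P) :=
    ⟨∫ x, |Z x| ∂P, by rintro - ⟨i, rfl⟩; exact hub i⟩
  refine le_antisymm (ciSup_le hub) ?_
  -- the generating algebra
  have halg : IsSetAlgebra {s : Set Ω | ∃ i, MeasurableSet[F i] s} := by
    refine { empty_mem := ?_, compl_mem := ?_, union_mem := ?_ }
    · exact ⟨Classical.arbitrary I, @MeasurableSet.empty _ (F _)⟩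
    · rintro s ⟨i, hi⟩; exact ⟨i, hi.compl⟩
    · rintro s t ⟨i, hi⟩ ⟨j, hj⟩
      obtain ⟨k, hik, hjk⟩ := directed_of (· ≤ ·) i j
      exact ⟨k, (hmono hik _ hi).union (hmono hjk _ hj)⟩
  have hgen' : mΩ = generateFrom {s : Set Ω | ∃ i, MeasurableSet[F i] s} := by
    rw [← hgen, measurableSpace_iSup_eq]
  have hdense : P.MeasureDense {s : Set Ω | ∃ i, MeasurableSet[F i] s} :=
    Measure.MeasureDense.of_generateFrom_isSetAlgebra_finite P halg hgen'
  -- the positivity set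
  set A : Set Ω := {x | Y x ≤ X x} with hA
  have hAmeas : MeasurableSet A := measurableSet_le hY hX
  have hsplit : ∫ x in A, Z x ∂P - ∫ x in Aᶜ, Z x ∂P = ∫ x, |Z x| ∂P := by
    have h1 : ∫ x in A, Z x ∂P = ∫ x in A, |Z x| ∂P := by
      refine setIntegral_congr_fun hAmeas fun x hx => ?_
      have : Y x ≤ X x := hx
      rw [abs_of_nonneg (by rw [hZx]; linarith)]
    have h2 : ∫ x in Aᶜ, |Z x| ∂P = -∫ x in Aᶜ, Z x ∂P := by
      rw [← integral_neg]
      refine setIntegral_congr_fun hAmeas.compl fun x hx => ?_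
      have hx' : ¬ Y x ≤ X x := hx
      exact abs_of_nonpos (by rw [hZx]; linarith)
    have h3 := integral_add_compl hAmeas hZint.abs
    linarith
  -- error estimate for replacing a set by an approximating one
  have key : ∀ (B C : Set Ω), MeasurableSet B → MeasurableSet C →
      |∫ x in B, Z x ∂P - ∫ x in C, Z x ∂P| ≤ r * (P (symmDiff C B)).toReal := by
    intro B C hB hC
    rw [← integral_indicator hB, ← integral_indicator hC,
      ← integral_sub (hZint.indicator hB) (hZint.indicator hC)]
    calc |∫ x, (B.indicator Z x - C.indicator Z x) ∂P|
        ≤ ∫ x, |B.indicator Z x - C.indicator Z x| ∂P := by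
          simpa [Real.norm_eq_abs] using
            norm_integral_le_integral_norm (fun x => B.indicator Z x - C.indicator Z x) (μ := P)
      _ ≤ ∫ x, (symmDiff C B).indicator (fun _ => r) x ∂P := by
          refine integral_mono_ae ((hZint.indicator hB).sub (hZint.indicator hC)).abs
            ((integrable_const r).indicator (hC.symmDiff hB)) ?_
          filter_upwards [hZbd] with x hx
          by_cases hxB : x ∈ B <;> by_cases hxC : x ∈ C
          · rw [Set.indicator_of_mem hxB, Set.indicator_of_mem hxC, sub_self, abs_zero]
            exact Set.indicator_nonneg (fun _ _ => hr.le) x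
          · have hmem : x ∈ symmDiff C B := by rw [Set.mem_symmDiff]; exact Or.inr ⟨hxB, hxC⟩
            rw [Set.indicator_of_mem hxB, Set.indicator_of_notMem hxC, sub_zero,
              Set.indicator_of_mem hmem]
            exact hx
          · have hmem : x ∈ symmDiff C B := by rw [Set.mem_symmDiff]; exact Or.inl ⟨hxC, hxB⟩
            rw [Set.indicator_of_notMem hxB, Set.indicator_of_mem hxC, zero_sub, abs_neg,
              Set.indicator_of_mem hmem]
            exact hx
          · rw [Set.indicator_of_notMem hxB, Set.indicator_of_notMem hxC, sub_self, abs_zero]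
            exact Set.indicator_nonneg (fun _ _ => hr.le) x
      _ = r * (P (symmDiff C B)).toReal := by
          rw [integral_indicator_const _ (hC.symmDiff hB), smul_eq_mul, mul_comm, measureReal_def]
  -- now prove the lower bound
  refine le_of_forall_sub_le fun δ hδ => ?_
  have hε : (0:ℝ) < δ / (2 * r) := by positivity
  obtain ⟨s, hs, hμs⟩ := hdense.approx A hAmeas (measure_ne_top P A) _ hε
  obtain ⟨i, hsi⟩ := hs
  have hsΩ : MeasurableSet s := hle i _ hsi
  have hμs' : (P (symmDiff A s)).toReal ≤ δ / (2 * r) :=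
    (ENNReal.toReal_lt_of_lt_ofReal hμs).le
  have est1 : |∫ x in s, Z x ∂P - ∫ x in A, Z x ∂P| ≤ r * (δ / (2 * r)) :=
    (key s A hsΩ hAmeas).trans (by gcongr)
  have est2 : |∫ x in sᶜ, Z x ∂P - ∫ x in Aᶜ, Z x ∂P| ≤ r * (δ / (2 * r)) := by
    refine (key sᶜ Aᶜ hsΩ.compl hAmeas.compl).trans ?_
    rw [compl_symmDiff_compl]; gcongr
  have hrd : r * (δ / (2 * r)) = δ / 2 := by field_simp
  -- conditional expectation identity on s
  haveI : SigmaFinite (P.trim (hle i)) := by infer_instance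
  have hci : ∀ (t : Set Ω), MeasurableSet[F i] t →
      ∫ x in t, Z x ∂P = ∫ x in t, (P[Z | F i]) x ∂P := fun t ht =>
    (setIntegral_condExp (hle i) hZint ht).symm
  have hfi : ∫ x in s, Z x ∂P - ∫ x in sᶜ, Z x ∂P
      ≤ ∫ x, |(P[X | F i]) x - (P[Y | F i]) x| ∂P := by
    rw [hci s hsi, hci sᶜ hsi.compl]
    have h1 : ∫ x in s, (P[Z | F i]) x ∂P ≤ ∫ x in s, |(P[Z | F i]) x| ∂P :=
      integral_mono integrable_condExp.restrict integrable_condExp.abs.restrict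
        fun x => le_abs_self _
    have h2 : -∫ x in sᶜ, (P[Z | F i]) x ∂P ≤ ∫ x in sᶜ, |(P[Z | F i]) x| ∂P := by
      rw [← integral_neg]
      exact integral_mono integrable_condExp.restrict.neg integrable_condExp.abs.restrict
        fun x => neg_le_abs _
    have h3 : ∫ x in s, |(P[Z | F i]) x| ∂P + ∫ x in sᶜ, |(P[Z | F i]) x| ∂P
        = ∫ x, |(P[Z | F i]) x| ∂P := integral_add_compl hsΩ integrable_condExp.abs
    have h4 : ∫ x, |(P[Z | F i]) x| ∂P = ∫ x, |(P[X | F i]) x - (P[Y | F i]) x| ∂P := by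
      refine integral_congr_ae ?_
      filter_upwards [hce i] with x hx; rw [hx]
    linarith
  have hsup : ∫ x, |(P[X | F i]) x - (P[Y | F i]) x| ∂P
      ≤ ⨆ j, ∫ x, |(P[X | F j]) x - (P[Y | F j]) x| ∂P := le_ciSup hbdd i
  rw [abs_le] at est1 est2
  rw [← hsplit]
  linarith [est1.1, est1.2, est2.1, est2.2]
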